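/- arXiv:1508.06782 — 2 statements merged into one kernel-verified Lean document; each statement's English description precedes it below -/
import Mathlib

section
/- Let n, j, k be positive integers with k ≥ j, let α > 0 be a constant, and let c be a real number with n/j − c ≥ √(k n log n) and c ≥ 0. Set ψ = 1/j − (c + α√(n/k))/n. Then for all sufficiently large n there exists a constant α₁ > 0 (depending only on α) such that n/j − c(1 − ψ/2) ≥ (n/j − c)·(1 + α₁ c/(2n)). -/
/-- (Deterministic recurrence `eq:dying_whp`.) With
`ψ = 1/j - (c + α√(n/k))/n`, if `n/j - c ≥ √(k n log n)` and `c ≥ 0`, then for all sufficiently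
large `n` there is a constant `α₁ > 0` (depending only on `α`) such that
`n/j - c(1 - ψ/2) ≥ (n/j - c)(1 + α₁ c/(2n))`. -/
theorem stmt11 (α : ℝ) (hα : 0 < α) :
    ∃ α₁ : ℝ, 0 < α₁ ∧ ∃ N : ℕ, ∀ n : ℕ, N ≤ n →
    ∀ j k : ℕ, 0 < j → j ≤ k →
    ∀ c : ℝ, 0 ≤ c →
      Real.sqrt ((k : ℝ) * n * Real.log n) ≤ (n : ℝ) / (j : ℝ) - c →
      (n : ℝ) / (j : ℝ) - c * (1 - (1 / (j : ℝ) -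
          (c + α * Real.sqrt ((n : ℝ) / (k : ℝ))) / (n : ℝ)) / 2) ≥
        ((n : ℝ) / (j : ℝ) - c) * (1 + α₁ * c / (2 * n)) := by
  refine ⟨1/2, by norm_num, ⌈Real.exp (4 * α ^ 2)⌉₊ + 1, ?_⟩
  intro n hn j k hj hjk c hc hD
  have hk : 0 < k := lt_of_lt_of_le hj hjk
  have hnR : (0:ℝ) < n := by
    have h1 : (1:ℕ) ≤ n := le_trans (by omega) hn
    exact_mod_cast lt_of_lt_of_le one_pos h1
  have hjR : (0:ℝ) < j := by exact_mod_cast hj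
  have hkR : (0:ℝ) < k := by exact_mod_cast hk
  have hkj : (1:ℝ) ≤ k := by exact_mod_cast hk
  -- log n ≥ 4 α²
  have hexp : Real.exp (4 * α ^ 2) ≤ (n:ℝ) := by
    calc Real.exp (4 * α ^ 2) ≤ (⌈Real.exp (4 * α ^ 2)⌉₊ : ℝ) := Nat.le_ceil _
    _ ≤ (n:ℝ) := by exact_mod_cast le_trans (by omega) hn
  have hlog : 4 * α ^ 2 ≤ Real.log n := by
    rw [← Real.log_exp (4 * α ^ 2)]
    exact Real.log_le_log (Real.exp_pos _) hexp
  set D := (n:ℝ) / (j:ℝ) - c with hDdef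
  set s := Real.sqrt ((n:ℝ) / (k:ℝ)) with hs
  have hsqrt_nonneg : (0:ℝ) ≤ Real.sqrt ((k : ℝ) * n * Real.log n) := Real.sqrt_nonneg _
  have hD0 : 0 ≤ D := le_trans hsqrt_nonneg hD
  have hlogpos : 0 ≤ Real.log n := by nlinarith [sq_nonneg α]
  -- D² ≥ k n log n
  have hDsq : (k:ℝ) * n * Real.log n ≤ D ^ 2 := by
    have := Real.sq_sqrt (by positivity : (0:ℝ) ≤ (k:ℝ) * n * Real.log n)
    nlinarith [hD, hsqrt_nonneg]
  -- (α s)² = α² n / k ≤ α² n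
  have hssq : s ^ 2 = (n:ℝ) / (k:ℝ) := Real.sq_sqrt (by positivity)
  have hs0 : 0 ≤ s := Real.sqrt_nonneg _
  -- key: 2 α s ≤ D
  have hkey : 2 * (α * s) ≤ D := by
    have h1 : (2 * (α * s)) ^ 2 ≤ D ^ 2 := by
      have hnk : (n:ℝ) / (k:ℝ) ≤ (n:ℝ) := by
        rw [div_le_iff₀ hkR]; nlinarith
      have h2 : (2 * (α * s)) ^ 2 = 4 * α ^ 2 * ((n:ℝ)/(k:ℝ)) := by
        rw [mul_pow, mul_pow, hssq]; ring
      have h3 : (k:ℝ) * n * Real.log n ≥ (n:ℝ) * Real.log n := by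
        nlinarith [mul_nonneg (sub_nonneg.mpr hkj) (mul_nonneg hnR.le hlogpos)]
      nlinarith [sq_nonneg α]
    have h4 := Real.sqrt_le_sqrt h1
    rwa [Real.sqrt_sq (by positivity), Real.sqrt_sq hD0] at h4
  -- algebra
  rw [ge_iff_le, ← sub_nonneg]
  have hdiff : (n : ℝ) / (j : ℝ) - c * (1 - (1 / (j : ℝ) -
          (c + α * s) / (n : ℝ)) / 2) -
        ((n : ℝ) / (j : ℝ) - c) * (1 + (1/2) * c / (2 * n))
      = c * (D - 2 * (α * s)) / (4 * n) := by
    rw [hDdef]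
    field_simp
    ring
  rw [hdiff]
  apply div_nonneg (mul_nonneg hc (by linarith)) (by positivity)
end

section
/- Let k ≤ n^α for a constant α < 1, and let c̃ be a configuration with Σ_{i∉𝒞} c̃_i ≤ γ√n/(k^{3/2} log n). Then for all sufficiently large n, for every opinion i with c̃_i ≤ γ√n/(k^{3/2} log n) (i.e., every small opinion), the expected count after one round of 3-majority dynamics satisfies E[C_i^{(t+1)} | c̃] ≤ c̃_i (1 − 1/(2k)); moreover the expected total support of non-valid opinions satisfies E[ Σ_{i∉𝒞} C_i^{(t+1)} | c̃ ] ≤ (γ√n/(k^{3/2} log n))·(1 − 1/(2k)). -/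
open MeasureTheory Finset
open scoped ENNReal NNReal

/-- Probability vector of one round of the 3-majority dynamics. -/
noncomputable def pvec {V : Type*} [Fintype V] (n : ℕ) (c : V → ℕ) (i : V) : ℝ :=
  ((c i : ℝ) / n) * (1 + (c i : ℝ) / n - ∑ j, ((c j : ℝ) / n) ^ 2)

/-- Multinomial probability mass function with `n` trials and probabilities `p`. -/
noncomputable def multinomialProb {V : Type*} [Fintype V] (n : ℕ) (p : V → ℝ)
    (c' : V → ℕ) : ℝ :=
  if ∑ i, c' i = n then
    ((n.factorial : ℝ) / ∏ i, ((c' i).factorial : ℝ)) * ∏ i, p i ^ c' i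
  else 0

/-- The smallness threshold `γ √n / (k^{3/2} log n)`. -/
noncomputable def smallThr (γ : ℝ) (n k : ℕ) : ℝ :=
  γ * Real.sqrt n / ((k : ℝ) ^ ((3 : ℝ) / 2) * Real.log n)

open scoped Classical in
/-- The set of big opinions of a configuration. -/
noncomputable def bigSet {V : Type*} [Fintype V] (γ : ℝ) (n k : ℕ) (c : V → ℕ) : Finset V :=
  Finset.univ.filter fun i => smallThr γ n k < (c i : ℝ)

open scoped Classical in
/-- The set of small opinions of a configuration. -/
noncomputable def smallSet {V : Type*} [Fintype V] (γ : ℝ) (n k : ℕ) (c : V → ℕ) : Finset V :=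
  Finset.univ.filter fun i => (c i : ℝ) ≤ smallThr γ n k

/-- The minimum count among big opinions of a configuration. -/
noncomputable def minBig {V : Type*} [Fintype V] (γ : ℝ) (n k : ℕ) (c : V → ℕ) : ℕ :=
  sInf (c '' (bigSet γ n k c : Set V))

/-- The 3-majority process with an `F`-dynamic adversary: `C t` is the configuration produced
by the dynamics at round `t`, `Ct t` the configuration after the adversary's action at round `t`;
conditionally on any history, `C (t+1)` is multinomial with probabilities `pvec n (Ct t)`. -/
structure AdvProcess (V : Type*) [Fintype V] (n F : ℕ)
    {Ω : Type*} [MeasurableSpace Ω] (P : Measure Ω) where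
  C : ℕ → Ω → V → ℕ
  Ct : ℕ → Ω → V → ℕ
  conf : ∀ t, ∀ᵐ ω ∂P, ∑ i, C t ω i = n
  conf' : ∀ t, ∀ᵐ ω ∂P, ∑ i, Ct t ω i = n
  adv : ∀ t, ∀ᵐ ω ∂P, ∑ i, ((Ct t ω i : ℤ) - (C t ω i : ℤ)).natAbs ≤ 2 * F
  step : ∀ (t : ℕ) (h : ℕ → (V → ℕ) × (V → ℕ)) (c' : V → ℕ),
    P ({ω | C (t + 1) ω = c'} ∩ {ω | ∀ s ≤ t, C s ω = (h s).1 ∧ Ct s ω = (h s).2}) =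
      ENNReal.ofReal (multinomialProb n (pvec n (h t).2) c') *
        P {ω | ∀ s ≤ t, C s ω = (h s).1 ∧ Ct s ω = (h s).2}


section Stmt12Helpers
set_option linter.unusedSectionVars false
set_option linter.unusedTactic false
set_option linter.unnecessarySimpa false

section PvecMult
variable {V : Type*} [Fintype V] [DecidableEq V]

lemma sum_pvec (n : ℕ) (hn : 0 < n) (c : V → ℕ) (hc : ∑ i, c i = n) :
    ∑ i, pvec n c i = 1 := by
  have hn' : (n : ℝ) ≠ 0 := Nat.cast_ne_zero.mpr hn.ne'
  have hs : ∑ i, ((c i : ℝ) / n) = 1 := by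
    rw [← Finset.sum_div]
    rw [div_eq_one_iff_eq hn']
    exact_mod_cast hc
  have hexp : ∀ i : V, pvec n c i = ((c i:ℝ)/n) + ((c i:ℝ)/n)^2 - ((c i:ℝ)/n) * ∑ j, ((c j : ℝ) / n) ^ 2 := by
    intro i; simp only [pvec]; ring
  simp only [hexp]
  rw [Finset.sum_sub_distrib, Finset.sum_add_distrib, hs, ← Finset.sum_mul, hs, one_mul]
  ring

lemma pvec_nonneg (n : ℕ) (hn : 0 < n) (c : V → ℕ) (hc : ∑ i, c i = n) (i : V) :
    0 ≤ pvec n c i := by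
  have hn' : (0:ℝ) < n := Nat.cast_pos.mpr hn
  have h1 : ∑ j, ((c j : ℝ) / n) ^ 2 ≤ 1 := by
    have : ∀ j, ((c j : ℝ) / n) ^ 2 ≤ (c j : ℝ) / n := by
      intro j
      have h1 : (c j : ℝ) / n ≤ 1 := by
        rw [div_le_one hn']
        exact_mod_cast (Finset.single_le_sum (f := fun j => c j) (fun _ _ => Nat.zero_le _) (Finset.mem_univ j)).trans_eq hc
      nlinarith [div_nonneg (Nat.cast_nonneg (c j)) hn'.le]
    calc ∑ j, ((c j : ℝ) / n) ^ 2 ≤ ∑ j, (c j : ℝ) / n := Finset.sum_le_sum fun j _ => this j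
    _ = 1 := by rw [← Finset.sum_div, div_eq_one_iff_eq hn'.ne']; exact_mod_cast hc
  have h2 : 0 ≤ (c i : ℝ) / n := div_nonneg (Nat.cast_nonneg _) hn'.le
  apply mul_nonneg h2
  nlinarith


lemma multinomialProb_nonneg (n : ℕ) (p : V → ℝ) (hp : ∀ i, 0 ≤ p i) (c' : V → ℕ) :
    0 ≤ multinomialProb n p c' := by
  unfold multinomialProb
  split
  · apply mul_nonneg
    · apply div_nonneg (Nat.cast_nonneg _)
      exact Finset.prod_nonneg fun i _ => Nat.cast_nonneg _
    · exact Finset.prod_nonneg fun i _ => pow_nonneg (hp i) _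
  · exact le_rfl

lemma multinomialProb_eq (n : ℕ) (p : V → ℝ) {c' : V → ℕ}
    (hc : c' ∈ Finset.piAntidiag (Finset.univ : Finset V) n) :
    multinomialProb n p c' = (Nat.multinomial Finset.univ c' : ℝ) * ∏ i, p i ^ c' i := by
  rw [Finset.mem_piAntidiag] at hc
  unfold multinomialProb
  rw [if_pos hc.1]
  congr 1
  have hspec := Nat.multinomial_spec (Finset.univ : Finset V) c'
  rw [hc.1] at hspec
  have hprodne : (∏ i, ((c' i).factorial : ℝ)) ≠ 0 :=
    Finset.prod_ne_zero_iff.mpr fun i _ => Nat.cast_ne_zero.mpr (Nat.factorial_ne_zero _)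
  field_simp
  rw [mul_comm]
  exact_mod_cast (hspec.symm.trans (mul_comm _ _))

lemma sum_multinomialProb (n : ℕ) (p : V → ℝ) (hp : ∑ i, p i = 1) :
    ∑ c' ∈ Finset.piAntidiag (Finset.univ : Finset V) n, multinomialProb n p c' = 1 := by
  have := Finset.sum_pow_eq_sum_piAntidiag (Finset.univ : Finset V) p n
  rw [hp, one_pow] at this
  rw [Finset.sum_congr rfl fun c' hc => multinomialProb_eq n p hc]
  rw [this]


lemma prod_update_fac (c' : V → ℕ) (i : V) (b : ℕ) :
    ∏ j, ((Function.update c' i b j).factorial : ℝ)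
      = (b.factorial : ℝ) * ∏ j ∈ Finset.univ.erase i, ((c' j).factorial : ℝ) := by
  rw [← Finset.mul_prod_erase Finset.univ _ (Finset.mem_univ i), Function.update_self]
  congr 1
  exact Finset.prod_congr rfl fun j hj => by rw [Function.update_of_ne (Finset.ne_of_mem_erase hj)]

lemma prod_pow_update (c' : V → ℕ) (i : V) (b : ℕ) (p : V → ℝ) :
    ∏ j, p j ^ (Function.update c' i b j) = p i ^ b * ∏ j ∈ Finset.univ.erase i, p j ^ c' j := by
  rw [← Finset.mul_prod_erase Finset.univ _ (Finset.mem_univ i), Function.update_self]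
  congr 1
  exact Finset.prod_congr rfl fun j hj => by rw [Function.update_of_ne (Finset.ne_of_mem_erase hj)]

lemma sum_update_nat (c' : V → ℕ) (i : V) (b : ℕ) :
    ∑ j, Function.update c' i b j = b + ∑ j ∈ Finset.univ.erase i, c' j := by
  rw [← Finset.add_sum_erase Finset.univ _ (Finset.mem_univ i), Function.update_self]
  congr 1
  exact Finset.sum_congr rfl fun j hj => by rw [Function.update_of_ne (Finset.ne_of_mem_erase hj)]

lemma mean_multinomialProb (n : ℕ) (hn : 0 < n) (p : V → ℝ) (hp : ∑ i, p i = 1) (i : V) :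
    ∑ c' ∈ Finset.piAntidiag (Finset.univ : Finset V) n, (c' i : ℝ) * multinomialProb n p c'
      = (n : ℝ) * p i := by
  classical
  rw [← Finset.sum_filter_of_ne (p := fun c' : V → ℕ => c' i ≠ 0)
    (fun c' _ h => by intro h0; rw [h0] at h; simp at h)]
  rw [Finset.sum_nbij' (i := fun c' => Function.update c' i (c' i - 1))
      (j := fun d => Function.update d i (d i + 1))
      (t := Finset.piAntidiag (Finset.univ : Finset V) (n - 1))
      (g := fun d => (n : ℝ) * p i * multinomialProb (n - 1) p d)]
  · rw [← Finset.mul_sum, sum_multinomialProb (n-1) p hp, mul_one]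
  · -- hi : maps into t
    intro c' hc'
    simp only [Finset.mem_filter, Finset.mem_piAntidiag] at hc' ⊢
    obtain ⟨⟨hsum, -⟩, hne⟩ := hc'
    have hsum : ∑ j, c' j = n := hsum
    have key : c' i + ∑ j ∈ Finset.univ.erase i, c' j = n := by
      rw [Finset.add_sum_erase _ c' (Finset.mem_univ i)]; exact hsum
    refine ⟨?_, fun j _ => Finset.mem_univ j⟩
    rw [sum_update_nat]
    omega
  · -- hj
    intro d hd
    simp only [Finset.mem_filter, Finset.mem_piAntidiag] at hd ⊢
    obtain ⟨hsum, -⟩ := hd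
    have hsum : ∑ j, d j = n - 1 := hsum
    have key : d i + ∑ j ∈ Finset.univ.erase i, d j = n - 1 := by
      rw [Finset.add_sum_erase _ d (Finset.mem_univ i)]; exact hsum
    refine ⟨⟨?_, fun j _ => Finset.mem_univ j⟩, ?_⟩
    · rw [sum_update_nat]; omega
    · simp [Function.update_self]
  · -- left inverse
    intro c' hc'
    simp only [Finset.mem_filter] at hc'
    funext j
    rcases eq_or_ne j i with rfl | hj
    · simp only [Function.update_self]
      have := hc'.2
      omega
    · simp [Function.update_of_ne hj]
  · -- right inverse
    intro d hd
    funext j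
    rcases eq_or_ne j i with rfl | hj
    · simp [Function.update_self]
    · simp [Function.update_of_ne hj]
  · -- term identity
    intro c' hc'
    simp only [Finset.mem_filter, Finset.mem_piAntidiag] at hc'
    obtain ⟨⟨hsum, -⟩, hne⟩ := hc'
    have hsum : ∑ j, c' j = n := hsum
    have key : c' i + ∑ j ∈ Finset.univ.erase i, c' j = n := by
      rw [Finset.add_sum_erase _ c' (Finset.mem_univ i)]; exact hsum
    have hd : ∑ j, Function.update c' i (c' i - 1) j = n - 1 := by
      rw [sum_update_nat]; omega
    unfold multinomialProb
    rw [if_pos hsum, if_pos hd, prod_update_fac, prod_pow_update,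
        ← Finset.mul_prod_erase Finset.univ (fun j => ((c' j).factorial : ℝ)) (Finset.mem_univ i),
        ← Finset.mul_prod_erase Finset.univ (fun j => p j ^ c' j) (Finset.mem_univ i)]
    obtain ⟨m, hm⟩ : ∃ m, c' i = m + 1 := ⟨c' i - 1, by omega⟩
    obtain ⟨q, hq⟩ : ∃ q, n = q + 1 := ⟨n - 1, by omega⟩
    rw [hm, hq]
    simp only [Nat.add_sub_cancel]
    rw [Nat.factorial_succ m, Nat.factorial_succ q, pow_succ]
    have h1 : ((m.factorial : ℝ)) ≠ 0 := Nat.cast_ne_zero.mpr (Nat.factorial_ne_zero _)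
    have h2 : (∏ j ∈ Finset.univ.erase i, ((c' j).factorial : ℝ)) ≠ 0 :=
      Finset.prod_ne_zero_iff.mpr fun j _ => Nat.cast_ne_zero.mpr (Nat.factorial_ne_zero _)
    push_cast
    field_simp


end PvecMult

lemma toMeasurable_ae_eq_self_of {Ω : Type*} [MeasurableSpace Ω] {P : Measure Ω}
    [IsProbabilityMeasure P] {A : Set Ω} (h : P A + P Aᶜ ≤ 1) :
    MeasureTheory.toMeasurable P A =ᵐ[P] A := by
  set B := toMeasurable P A with hB
  set B' := toMeasurable P Aᶜ with hB'
  have hB'm : MeasurableSet B' := measurableSet_toMeasurable P Aᶜ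
  have hU : B ∪ B' = Set.univ := by
    apply Set.eq_univ_of_univ_subset
    intro ω _
    by_cases hω : ω ∈ A
    · exact Or.inl (subset_toMeasurable P A hω)
    · exact Or.inr (subset_toMeasurable P Aᶜ hω)
  have hsum : P (B ∪ B') + P (B ∩ B') = P B + P B' := measure_union_add_inter B hB'm
  have hnull : P (B ∩ B') = 0 := by
    have key : (1:ℝ≥0∞) + P (B ∩ B') ≤ 1 + 0 := by
      rw [add_zero]
      calc (1:ℝ≥0∞) + P (B ∩ B') = P (B ∪ B') + P (B ∩ B') := by
            rw [hU, measure_univ]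
        _ = P B + P B' := hsum
        _ = P A + P Aᶜ := by rw [hB, hB', measure_toMeasurable, measure_toMeasurable]
        _ ≤ 1 := h
    have := (ENNReal.add_le_add_iff_left (by norm_num : (1:ℝ≥0∞) ≠ ⊤)).mp key
    exact le_antisymm this zero_le
  rw [MeasureTheory.ae_eq_set]
  constructor
  · apply measure_mono_null _ hnull
    intro ω hω
    exact ⟨hω.1, subset_toMeasurable P Aᶜ hω.2⟩
  · have : A \ B = ∅ := Set.diff_eq_empty.mpr (subset_toMeasurable P A)
    rw [this]
    simp

section Expect
variable {V : Type*} [Fintype V] [DecidableEq V] {Ω : Type*} [MeasurableSpace Ω]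
  (P : Measure Ω) [IsProbabilityMeasure P]

lemma expectation_spec (n : ℕ) (hn : 0 < n) (p : V → ℝ)
    (hp0 : ∀ i, 0 ≤ p i) (hp1 : ∑ i, p i = 1) (C' : Ω → V → ℕ)
    (hP : ∀ c' : V → ℕ, P {ω | C' ω = c'} = ENNReal.ofReal (multinomialProb n p c')) :
    ∀ i, Integrable (fun ω => (C' ω i : ℝ)) P ∧
      ∫ ω, (C' ω i : ℝ) ∂P = (n : ℝ) * p i := by
  classical
  set S := Finset.piAntidiag (Finset.univ : Finset V) n with hSdef
  set w : (V → ℕ) → ℝ := multinomialProb n p with hwdef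
  set A : (V → ℕ) → Set Ω := fun c' => {ω | C' ω = c'} with hAdef
  have hw0 : ∀ c', 0 ≤ w c' := multinomialProb_nonneg n p hp0
  have hwS : ∑ c' ∈ S, w c' = 1 := sum_multinomialProb n p hp1
  have hw_out : ∀ c' : V → ℕ, ∑ j, c' j ≠ n → w c' = 0 := by
    intro c' h; simp only [hwdef, multinomialProb, if_neg h]
  -- a.e. the total is n
  have hnull : P {ω | ∑ j, C' ω j ≠ n} = 0 := by
    have hsub : {ω | ∑ j, C' ω j ≠ n} ⊆
        ⋃ c' : {d : V → ℕ // ∑ j, d j ≠ n}, A c'.val := by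
      intro ω hω
      exact Set.mem_iUnion.mpr ⟨⟨C' ω, hω⟩, rfl⟩
    apply measure_mono_null hsub
    apply measure_iUnion_null
    intro c'
    rw [hP c'.val, hw_out c'.val c'.prop, ENNReal.ofReal_zero]
  -- null measurability of the fibers
  have haeB : ∀ c' ∈ S, MeasureTheory.toMeasurable P (A c') =ᵐ[P] A c' := by
    intro c' hc'
    apply toMeasurable_ae_eq_self_of
    have hwle : w c' ≤ 1 := hwS ▸ Finset.single_le_sum (fun d _ => hw0 d) hc'
    have hcompl : P (A c')ᶜ ≤ ENNReal.ofReal (1 - w c') := by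
      have hsub : (A c')ᶜ ⊆ (⋃ d ∈ S.erase c', A d) ∪ {ω | ∑ j, C' ω j ≠ n} := by
        intro ω hω
        by_cases hs : ∑ j, C' ω j = n
        · left
          have hmem : C' ω ∈ S.erase c' := by
            rw [Finset.mem_erase, hSdef, Finset.mem_piAntidiag]
            exact ⟨hω, hs, fun j _ => Finset.mem_univ j⟩
          exact Set.mem_biUnion hmem rfl
        · exact Or.inr hs
      calc P (A c')ᶜ ≤ P (⋃ d ∈ S.erase c', A d) + P {ω | ∑ j, C' ω j ≠ n} :=
            le_trans (measure_mono hsub) (measure_union_le _ _)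
        _ = P (⋃ d ∈ S.erase c', A d) := by rw [hnull, add_zero]
        _ ≤ ∑ d ∈ S.erase c', P (A d) := measure_biUnion_finset_le _ _
        _ = ∑ d ∈ S.erase c', ENNReal.ofReal (w d) := by
            exact Finset.sum_congr rfl fun d _ => hP d
        _ = ENNReal.ofReal (∑ d ∈ S.erase c', w d) :=
            (ENNReal.ofReal_sum_of_nonneg (fun d _ => hw0 d)).symm
        _ = ENNReal.ofReal (1 - w c') := by
            congr 1
            have := Finset.add_sum_erase S w hc'
            linarith
    calc P (A c') + P (A c')ᶜ ≤ ENNReal.ofReal (w c') + ENNReal.ofReal (1 - w c') := by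
          apply add_le_add _ hcompl
          rw [hP c']
      _ = ENNReal.ofReal 1 := by
          rw [← ENNReal.ofReal_add (hw0 c') (by linarith)]
          congr 1
          ring
      _ = 1 := ENNReal.ofReal_one
  intro i
  set h : Ω → ℝ := fun ω => ∑ c' ∈ S, (c' i : ℝ) *
    (MeasureTheory.toMeasurable P (A c')).indicator (fun _ => (1:ℝ)) ω with hhdef
  have hInt : Integrable h P := by
    apply integrable_finset_sum
    intro c' _
    exact (((integrable_const (1:ℝ)).indicator (measurableSet_toMeasurable P (A c'))).const_mul _)
  have hval : ∫ ω, h ω ∂P = ∑ c' ∈ S, (c' i : ℝ) * w c' := by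
    rw [hhdef]
    rw [integral_finset_sum _ (fun c' _ =>
      ((integrable_const (1:ℝ)).indicator (measurableSet_toMeasurable P (A c'))).const_mul _)]
    apply Finset.sum_congr rfl
    intro c' hc'
    rw [MeasureTheory.integral_const_mul, integral_indicator_const _ (measurableSet_toMeasurable P (A c'))]
    rw [measureReal_def, measure_toMeasurable, hP c', smul_eq_mul, mul_one,
      ENNReal.toReal_ofReal (hw0 c')]
  have haef : (fun ω => (C' ω i : ℝ)) =ᵐ[P] h := by
    have h1 : ∀ᵐ ω ∂P, ∑ j, C' ω j = n := by
      rw [MeasureTheory.ae_iff]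
      simpa using hnull
    have h2 : ∀ᵐ ω ∂P, ∀ c' ∈ S,
        (ω ∈ MeasureTheory.toMeasurable P (A c') ↔ ω ∈ A c') := by
      rw [Filter.eventually_all_finset]
      intro c' hc'
      have := haeB c' hc'
      rw [Filter.eventuallyEq_set] at this
      exact this
    filter_upwards [h1, h2] with ω hω hiff
    have hmem : C' ω ∈ S := by
      rw [hSdef, Finset.mem_piAntidiag]
      exact ⟨hω, fun j _ => Finset.mem_univ j⟩
    show (C' ω i : ℝ) = ∑ c' ∈ S, (c' i : ℝ) *
      (MeasureTheory.toMeasurable P (A c')).indicator (fun _ => (1:ℝ)) ω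
    rw [Finset.sum_eq_single (C' ω)]
    · have : ω ∈ MeasureTheory.toMeasurable P (A (C' ω)) := (hiff _ hmem).mpr rfl
      simp [Set.indicator_apply, this]
    · intro c' hc' hne
      have : ω ∉ MeasureTheory.toMeasurable P (A c') := by
        rw [hiff c' hc']
        exact fun hct => hne (Eq.symm hct)
      simp [Set.indicator_apply, this]
    · intro hnotmem
      exact absurd hmem hnotmem
  constructor
  · exact hInt.congr haef.symm
  · rw [integral_congr_ae haef, hval, mean_multinomialProb n hn p hp1 i]

end Expect

lemma smallThr_props (γ : ℝ) (hγ : 0 < γ) (n k : ℕ) (hk : 2 ≤ k) (hn3 : 3 ≤ n)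
    (hlog : 4 * γ ≤ Real.log n) :
    0 ≤ smallThr γ n k ∧ smallThr γ n k * (2 * (k:ℝ) + 4) ≤ n := by
  have hn1 : (1:ℝ) < n := by exact_mod_cast lt_of_lt_of_le (by norm_num : (1:ℕ) < 3) hn3
  have hlogpos : 0 < Real.log n := Real.log_pos hn1
  have hk1 : (1:ℝ) ≤ k := by exact_mod_cast le_trans (by norm_num) hk
  have hk2 : (2:ℝ) ≤ k := by exact_mod_cast hk
  have hkpos : (0:ℝ) < k := by linarith
  have hrpow : (k:ℝ) ≤ (k:ℝ) ^ ((3:ℝ)/2) := by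
    calc (k:ℝ) = (k:ℝ) ^ (1:ℝ) := (Real.rpow_one _).symm
      _ ≤ (k:ℝ) ^ ((3:ℝ)/2) := Real.rpow_le_rpow_of_exponent_le hk1 (by norm_num)
  have hrpowpos : (0:ℝ) < (k:ℝ) ^ ((3:ℝ)/2) := Real.rpow_pos_of_pos hkpos _
  have hsq : (0:ℝ) ≤ Real.sqrt n := Real.sqrt_nonneg _
  have hthr0 : 0 ≤ smallThr γ n k := by
    unfold smallThr
    positivity
  refine ⟨hthr0, ?_⟩
  have h1 : smallThr γ n k ≤ Real.sqrt n / (4 * k) := by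
    unfold smallThr
    have hden : (k:ℝ) * (4 * γ) ≤ (k:ℝ) ^ ((3:ℝ)/2) * Real.log n :=
      mul_le_mul hrpow hlog (by linarith) (le_of_lt hrpowpos)
    have hdenpos : (0:ℝ) < (k:ℝ) * (4 * γ) := by positivity
    calc γ * Real.sqrt n / ((k:ℝ) ^ ((3:ℝ)/2) * Real.log n)
        ≤ γ * Real.sqrt n / ((k:ℝ) * (4 * γ)) :=
          div_le_div_of_nonneg_left (by positivity) hdenpos hden
      _ = Real.sqrt n / (4 * k) := by field_simp
  have hsqle : Real.sqrt n ≤ n := by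
    calc Real.sqrt n ≤ Real.sqrt ((n:ℝ)^2) := Real.sqrt_le_sqrt (by nlinarith)
      _ = n := Real.sqrt_sq (by positivity)
  calc smallThr γ n k * (2 * (k:ℝ) + 4) ≤ (Real.sqrt n / (4 * k)) * (4 * k) := by
        apply mul_le_mul h1 (by linarith) (by linarith) (by positivity)
    _ = Real.sqrt n := by field_simp
    _ ≤ n := hsqle

lemma np_le {V : Type*} [Fintype V] [DecidableEq V] (n k : ℕ) (hn : 0 < n) (hk : 2 ≤ k)
    (𝒞 : Finset V) (hkc : k = 𝒞.card) (c : V → ℕ) (hc : ∑ j, c j = n)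
    (thr : ℝ) (hthr0 : 0 ≤ thr) (hthrn : thr * (2 * (k:ℝ) + 4) ≤ n)
    (hCc : ∑ j ∈ 𝒞ᶜ, (c j : ℝ) ≤ thr) (i : V) (hi : (c i : ℝ) ≤ thr) :
    (n : ℝ) * pvec n c i ≤ (c i : ℝ) * (1 - 1 / (2 * (k:ℝ))) := by
  have hnR : (0:ℝ) < n := by exact_mod_cast hn
  have hkR : (2:ℝ) ≤ k := by exact_mod_cast hk
  have hkpos : (0:ℝ) < k := by linarith
  set x : ℝ := ∑ j, (c j : ℝ)^2 with hxdef
  have hcR : ∑ j, (c j : ℝ) = n := by exact_mod_cast hc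
  have hsplit : ∑ j ∈ 𝒞, (c j : ℝ) + ∑ j ∈ 𝒞ᶜ, (c j : ℝ) = n := by
    rw [Finset.sum_add_sum_compl]; exact hcR
  have hClow : (n : ℝ) - thr ≤ ∑ j ∈ 𝒞, (c j : ℝ) := by linarith
  have hCS : (∑ j ∈ 𝒞, (c j : ℝ))^2 ≤ (𝒞.card : ℝ) * ∑ j ∈ 𝒞, (c j : ℝ)^2 := by
    exact_mod_cast sq_sum_le_card_mul_sum_sq (s := 𝒞) (f := fun j => (c j : ℝ))
  have hsub : ∑ j ∈ 𝒞, (c j : ℝ)^2 ≤ x :=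
    Finset.sum_le_sum_of_subset_of_nonneg (Finset.subset_univ _) (fun j _ _ => sq_nonneg _)
  have hntm : 0 ≤ (n:ℝ) - thr := by nlinarith
  have hx : ((n:ℝ) - thr)^2 ≤ x * k := by
    calc ((n:ℝ) - thr)^2 ≤ (∑ j ∈ 𝒞, (c j : ℝ))^2 := by nlinarith
      _ ≤ (𝒞.card : ℝ) * ∑ j ∈ 𝒞, (c j : ℝ)^2 := hCS
      _ ≤ x * k := by rw [hkc]; push_cast; nlinarith [(Nat.cast_nonneg (𝒞.card) : (0:ℝ) ≤ (𝒞.card:ℝ)), hsub, hkpos]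
  have key : (c i : ℝ)/n + 1/(2*(k:ℝ)) ≤ x/(n:ℝ)^2 := by
    rw [div_add_div _ _ (ne_of_gt hnR) (by positivity), div_le_div_iff₀ (by positivity) (by positivity)]
    nlinarith [sq_nonneg thr, mul_pos hnR hkpos, mul_nonneg hthr0 hnR.le,
      mul_le_mul_of_nonneg_right hi (mul_nonneg hnR.le hkpos.le)]
  have hpvec : pvec n c i = (c i : ℝ)/n * (1 + (c i : ℝ)/n - x/(n:ℝ)^2) := by
    unfold pvec
    congr 2
    rw [hxdef, Finset.sum_div]
    exact Finset.sum_congr rfl fun j _ => by rw [div_pow]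
  rw [hpvec]
  have hfold : (n:ℝ) * ((c i : ℝ)/n * (1 + (c i : ℝ)/n - x/(n:ℝ)^2))
      = (c i : ℝ) * (1 + (c i : ℝ)/n - x/(n:ℝ)^2) := by
    field_simp
  rw [hfold]
  apply mul_le_mul_of_nonneg_left _ (Nat.cast_nonneg _)
  linarith


end Stmt12Helpers

/-- (Expectation bounds in Lemma `le:hyp-H`.) If `k ≤ n^α` (α < 1) and the
non-valid mass of `ctil` is at most the smallness threshold, then for all sufficiently large
`n`: every small opinion has `E[C_i'] ≤ c̃_i (1 - 1/(2k))` after one round of 3-majority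
dynamics, and the expected non-valid mass satisfies `E[∑_{i∉𝒞} C_i'] ≤ thr · (1 - 1/(2k))`. -/
theorem stmt12 :
    ∀ γ α : ℝ, 0 < γ → α < 1 →
    ∃ N : ℕ, ∀ n : ℕ, N ≤ n →
    ∀ (V : Type) [Fintype V] [DecidableEq V] (Ω : Type) [MeasurableSpace Ω]
      (P : Measure Ω), IsProbabilityMeasure P →
    ∀ (k : ℕ) (𝒞 : Finset V) (ctil : V → ℕ) (C' : Ω → V → ℕ),
      k = 𝒞.card → 2 ≤ k →
      (k : ℝ) ≤ (n : ℝ) ^ α →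
      (∑ i, ctil i = n) →
      (∑ i ∈ 𝒞ᶜ, (ctil i : ℝ)) ≤ smallThr γ n k →
      (∀ c' : V → ℕ,
        P {ω | C' ω = c'} = ENNReal.ofReal (multinomialProb n (pvec n ctil) c')) →
      (∀ i : V, (ctil i : ℝ) ≤ smallThr γ n k →
        ∫ ω, (C' ω i : ℝ) ∂P ≤ (ctil i : ℝ) * (1 - 1 / (2 * (k : ℝ)))) ∧
      (∫ ω, (∑ i ∈ 𝒞ᶜ, (C' ω i : ℝ)) ∂P ≤ smallThr γ n k * (1 - 1 / (2 * (k : ℝ)))) := by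
  intro γ α hγ hα
  refine ⟨max 3 ⌈Real.exp (4 * γ)⌉₊, ?_⟩
  intro n hN V _ _ Ω _ P hProb k 𝒞 ctil C' hkc hk2 hka hsum hCc hP
  have hn3 : 3 ≤ n := le_trans (le_max_left _ _) hN
  have hn : 0 < n := by omega
  have hlog : 4 * γ ≤ Real.log n := by
    have h1 : Real.exp (4 * γ) ≤ n := by
      calc Real.exp (4 * γ) ≤ (⌈Real.exp (4 * γ)⌉₊ : ℝ) := Nat.le_ceil _
        _ ≤ n := by exact_mod_cast le_trans (le_max_right _ _) hN
    calc 4 * γ = Real.log (Real.exp (4 * γ)) := (Real.log_exp _).symm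
      _ ≤ Real.log n := Real.log_le_log (Real.exp_pos _) h1
  obtain ⟨hthr0, hthrn⟩ := smallThr_props γ hγ n k hk2 hn3 hlog
  have hp0 := pvec_nonneg n hn ctil hsum
  have hp1 := sum_pvec n hn ctil hsum
  have spec := expectation_spec P n hn (pvec n ctil) hp0 hp1 C' hP
  have hbound : ∀ i : V, (ctil i : ℝ) ≤ smallThr γ n k →
      ∫ ω, (C' ω i : ℝ) ∂P ≤ (ctil i : ℝ) * (1 - 1 / (2 * (k : ℝ))) := by
    intro i hi
    rw [(spec i).2]
    exact np_le n k hn hk2 𝒞 hkc ctil hsum _ hthr0 hthrn hCc i hi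
  refine ⟨hbound, ?_⟩
  have hkR : (2:ℝ) ≤ k := by exact_mod_cast hk2
  have hfac : (0:ℝ) ≤ 1 - 1 / (2 * (k:ℝ)) := by
    have : 1 / (2 * (k:ℝ)) ≤ 1 := by
      rw [div_le_one (by linarith)]
      linarith
    linarith
  rw [integral_finset_sum 𝒞ᶜ (fun i _ => (spec i).1)]
  calc ∑ i ∈ 𝒞ᶜ, ∫ ω, (C' ω i : ℝ) ∂P
      ≤ ∑ i ∈ 𝒞ᶜ, (ctil i : ℝ) * (1 - 1 / (2 * (k:ℝ))) := by
        apply Finset.sum_le_sum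
        intro i hi
        apply hbound
        calc (ctil i : ℝ) ≤ ∑ j ∈ 𝒞ᶜ, (ctil j : ℝ) :=
              Finset.single_le_sum (f := fun j => (ctil j : ℝ)) (fun j _ => Nat.cast_nonneg _) hi
          _ ≤ smallThr γ n k := hCc
    _ = (∑ i ∈ 𝒞ᶜ, (ctil i : ℝ)) * (1 - 1 / (2 * (k:ℝ))) := (Finset.sum_mul _ _ _).symm
    _ ≤ smallThr γ n k * (1 - 1 / (2 * (k:ℝ))) := mul_le_mul_of_nonneg_right hCc hfac
end
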